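/- One has ∑'_{(m,n)∈ℤ², m even and n even, (m,n)≠(0,0)} 1/(m² + n²)² + ∑'_{(m,n)∈ℤ², m even, (m,n)≠(0,0)} n²/(m² + n²)³ = ∑'_{(m,n)∈ℤ², m odd} m²/(m² + n²)³. -/

import Mathlib

noncomputable section AuxStmt6

/-- denominator -/
def Dd (p : ℤ × ℤ) : ℝ := (p.1 : ℝ) ^ 2 + (p.2 : ℝ) ^ 2

lemma Dd_nonneg (p : ℤ × ℤ) : 0 ≤ Dd p := by unfold Dd; positivity

lemma Dd_pos {p : ℤ × ℤ} (hp : p ≠ 0) : 0 < Dd p := by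
  have h : p.1 ≠ 0 ∨ p.2 ≠ 0 := by
    by_contra hc; push_neg at hc; exact hp (Prod.ext hc.1 hc.2)
  unfold Dd
  rcases h with h | h
  · have h' : (p.1 : ℝ) ≠ 0 := Int.cast_ne_zero.mpr h
    positivity
  · have h' : (p.2 : ℝ) ≠ 0 := Int.cast_ne_zero.mpr h
    positivity

/-- the master summable majorant -/
lemma summable_master : Summable fun p : ℤ × ℤ => 1 / (Dd p) ^ 2 := by
  have h := EisensteinSeries.summable_one_div_norm_rpow (k := 4) (by norm_num)
  rw [← (finTwoArrowEquiv ℤ).summable_iff]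
  apply h.of_nonneg_of_le
    (fun x => div_nonneg zero_le_one (pow_nonneg (Dd_nonneg _) 2))
  intro x
  show 1 / (Dd (finTwoArrowEquiv ℤ x)) ^ 2 ≤ _
  rcases eq_or_ne x 0 with hx | hx
  · simp [hx, finTwoArrowEquiv, Dd, Real.zero_rpow (by norm_num : (-4:ℝ) ≠ 0)]
  · have hnorm : (0:ℝ) < ‖x‖ := norm_pos_iff.mpr hx
    have h1 : ‖x‖ ^ (-(4:ℝ)) = 1 / ‖x‖ ^ (4:ℕ) := by
      rw [Real.rpow_neg (norm_nonneg _), one_div, ← Real.rpow_natCast ‖x‖ 4]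
      norm_num
    rw [h1]
    have hD : Dd (finTwoArrowEquiv ℤ x) = (x 0 : ℝ) ^ 2 + (x 1 : ℝ) ^ 2 := rfl
    have hle : ‖x‖ ^ (4:ℕ) ≤ (Dd (finTwoArrowEquiv ℤ x)) ^ 2 := by
      rw [hD]
      have hb : ‖x‖ ^ 2 ≤ (x 0 : ℝ) ^ 2 + (x 1 : ℝ) ^ 2 := by
        rw [EisensteinSeries.norm_eq_max_natAbs]
        rcases le_total ((x 0).natAbs) ((x 1).natAbs) with hm | hm
        · rw [max_eq_right (by exact_mod_cast hm)]
          have : ((x 1).natAbs : ℝ) ^ 2 = (x 1 : ℝ) ^ 2 := by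
            rw [Nat.cast_natAbs]; push_cast; rw [sq_abs]
          nlinarith [sq_nonneg ((x 0 : ℝ))]
        · rw [max_eq_left (by exact_mod_cast hm)]
          have : ((x 0).natAbs : ℝ) ^ 2 = (x 0 : ℝ) ^ 2 := by
            rw [Nat.cast_natAbs]; push_cast; rw [sq_abs]
          nlinarith [sq_nonneg ((x 1 : ℝ))]
      calc ‖x‖ ^ (4:ℕ) = (‖x‖ ^ 2) ^ 2 := by ring
        _ ≤ ((x 0 : ℝ) ^ 2 + (x 1 : ℝ) ^ 2) ^ 2 := by
            apply pow_le_pow_left₀ (by positivity) hb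
    apply one_div_le_one_div_of_le (by positivity) hle

lemma summable_of_le_master (f : ℤ × ℤ → ℝ) (h : ∀ p, |f p| ≤ 1 / (Dd p) ^ 2) :
    Summable f := by
  apply Summable.of_abs
  exact summable_master.of_nonneg_of_le (fun p => abs_nonneg _) h

/-- g p = n^2 / D^3 -/
def gg (p : ℤ × ℤ) : ℝ := (p.2 : ℝ) ^ 2 / (Dd p) ^ 3
def gg1 (p : ℤ × ℤ) : ℝ := (p.1 : ℝ) ^ 2 / (Dd p) ^ 3
def hh (p : ℤ × ℤ) : ℝ := (p.1 : ℝ) * (p.2 : ℝ) / (Dd p) ^ 3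

lemma gg_nonneg (p : ℤ × ℤ) : 0 ≤ gg p := div_nonneg (by positivity) (pow_nonneg (Dd_nonneg p) 3)
lemma gg1_nonneg (p : ℤ × ℤ) : 0 ≤ gg1 p := div_nonneg (by positivity) (pow_nonneg (Dd_nonneg p) 3)

lemma gg_le (p : ℤ × ℤ) : gg p ≤ 1 / (Dd p) ^ 2 := by
  rcases eq_or_ne p 0 with hp | hp
  · simp [hp, gg, Dd]
  · have hD := Dd_pos hp
    have h2 : (p.2 : ℝ) ^ 2 ≤ Dd p := by unfold Dd; nlinarith [sq_nonneg ((p.1 : ℝ))]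
    rw [gg, div_le_div_iff₀ (by positivity) (by positivity)]
    nlinarith [sq_nonneg (Dd p)]

lemma gg1_le (p : ℤ × ℤ) : gg1 p ≤ 1 / (Dd p) ^ 2 := by
  rcases eq_or_ne p 0 with hp | hp
  · simp [hp, gg1, Dd]
  · have hD := Dd_pos hp
    have h2 : (p.1 : ℝ) ^ 2 ≤ Dd p := by unfold Dd; nlinarith [sq_nonneg ((p.2 : ℝ))]
    rw [gg1, div_le_div_iff₀ (by positivity) (by positivity)]
    nlinarith [sq_nonneg (Dd p)]

lemma hh_le (p : ℤ × ℤ) : |hh p| ≤ 1 / (Dd p) ^ 2 := by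
  rcases eq_or_ne p 0 with hp | hp
  · simp [hp, hh, Dd]
  · have hD := Dd_pos hp
    have habs : |(p.1 : ℝ) * (p.2 : ℝ)| ≤ Dd p := by
      unfold Dd
      rw [abs_mul]
      nlinarith [sq_nonneg (|(p.1:ℝ)| - |(p.2:ℝ)|), sq_abs ((p.1:ℝ)), sq_abs ((p.2:ℝ)),
        abs_nonneg ((p.1:ℝ)), abs_nonneg ((p.2:ℝ))]
    rw [hh, abs_div, abs_of_pos (by positivity : (0:ℝ) < (Dd p)^3),
      div_le_div_iff₀ (by positivity) (by positivity)]
    nlinarith [sq_nonneg (Dd p)]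

lemma summable_gg : Summable gg :=
  summable_of_le_master gg (fun p => by rw [abs_of_nonneg (gg_nonneg p)]; exact gg_le p)
lemma summable_gg1 : Summable gg1 :=
  summable_of_le_master gg1 (fun p => by rw [abs_of_nonneg (gg1_nonneg p)]; exact gg1_le p)
lemma summable_hh : Summable hh := summable_of_le_master hh hh_le

lemma summable_ite (c : ℤ × ℤ → Prop) [DecidablePred c] :
    Summable fun p => if c p then gg p else 0 := by
  apply summable_of_le_master
  intro p
  by_cases h : c p
  · simp only [h, if_true]
    rw [abs_of_nonneg (gg_nonneg p)]; exact gg_le p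
  · simp only [h, if_false, abs_zero]
    positivity

/-- sum of hh is zero by odd symmetry -/
lemma tsum_hh_zero : ∑' p, hh p = 0 := by
  have h1 : ∑' p : ℤ × ℤ, hh (((Equiv.neg ℤ).prodCongr (Equiv.refl ℤ)) p) = ∑' p, hh p :=
    ((Equiv.neg ℤ).prodCongr (Equiv.refl ℤ)).tsum_eq hh
  have h2 : ∀ p : ℤ × ℤ, hh (((Equiv.neg ℤ).prodCongr (Equiv.refl ℤ)) p) = - hh p := by
    intro p
    show hh (-p.1, p.2) = - hh p
    unfold hh Dd
    push_cast
    ring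
  rw [tsum_congr h2, tsum_neg] at h1
  linarith

lemma tsum_gg1_eq : ∑' p, gg1 p = ∑' p, gg p := by
  have h1 : ∑' p, gg (Prod.swap p) = ∑' p, gg p := (Equiv.prodComm ℤ ℤ).tsum_eq gg
  rw [← h1]
  apply tsum_congr
  intro p
  unfold gg gg1 Dd
  simp [Prod.swap]
  ring_nf

/-- T = 2E -/
lemma tsum_master_eq : ∑' p, 1 / (Dd p) ^ 2 = 2 * ∑' p, gg p := by
  have key : ∀ p : ℤ × ℤ, 1 / (Dd p) ^ 2 = gg1 p + gg p := by
    intro p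
    rcases eq_or_ne p 0 with hp | hp
    · simp [hp, gg, gg1, Dd]
    · have hD := Dd_pos hp
      unfold gg gg1
      rw [← add_div, eq_div_iff (by positivity)]
      have : (p.1:ℝ)^2 + (p.2:ℝ)^2 = Dd p := rfl
      rw [this]
      field_simp
    
  rw [tsum_congr key, Summable.tsum_add summable_gg1 summable_gg, tsum_gg1_eq]
  ring

lemma quarter (a b : ℝ) (h : a ^ 2 + b ^ 2 ≠ 0) :
    (2 * b) ^ 2 / ((2 * a) ^ 2 + (2 * b) ^ 2) ^ 3 = b ^ 2 / (a ^ 2 + b ^ 2) ^ 3 / 16 := by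
  have h64 : ((2 * a) ^ 2 + (2 * b) ^ 2) ^ 3 = 64 * (a ^ 2 + b ^ 2) ^ 3 := by ring
  rw [h64, div_div, div_eq_div_iff (mul_ne_zero (by norm_num) (pow_ne_zero 3 h))
    (mul_ne_zero (pow_ne_zero 3 h) (by norm_num))]
  ring

/-- even-even sum = E/16 -/
lemma tsum_ee : (∑' p : ℤ × ℤ, if Even p.1 ∧ Even p.2 then gg p else 0)
    = (∑' p, gg p) / 16 := by
  set f : ℤ × ℤ → ℝ := fun p => if Even p.1 ∧ Even p.2 then gg p else 0 with hf
  have hinj : Function.Injective (fun p : ℤ × ℤ => ((2 * p.1, 2 * p.2) : ℤ × ℤ)) := by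
    intro a b hab
    simp only [Prod.mk.injEq] at hab
    exact Prod.ext (by omega) (by omega)
  have hzero : ∀ x ∉ Set.range (fun p : ℤ × ℤ => ((2 * p.1, 2 * p.2) : ℤ × ℤ)), f x = 0 := by
    intro x hx
    rw [hf]
    simp only
    rw [if_neg]
    rintro ⟨⟨a, ha⟩, ⟨b, hb⟩⟩
    exact hx ⟨(a, b), by simp [Prod.ext_iff]; omega⟩
  have h := hinj.tsum_eq (Function.support_subset_iff'.mpr hzero)
  rw [← h]
  have hcomp : ∀ p : ℤ × ℤ, f (2 * p.1, 2 * p.2) = gg p / 16 := by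
    intro p
    rw [hf]
    simp only
    rw [if_pos ⟨⟨p.1, by ring⟩, ⟨p.2, by ring⟩⟩]
    unfold gg Dd
    push_cast
    rcases eq_or_ne p 0 with hp | hp
    · simp [hp]
    · have hD := Dd_pos hp
      unfold Dd at hD
      have hne : ((p.1:ℝ)^2 + (p.2:ℝ)^2) ≠ 0 := ne_of_gt hD
      exact quarter (p.1:ℝ) (p.2:ℝ) hne
  calc ∑' p : ℤ × ℤ, f (2 * p.1, 2 * p.2) = ∑' p : ℤ × ℤ, gg p / 16 := tsum_congr hcomp
    _ = (∑' p, gg p) / 16 := by rw [tsum_div_const]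

lemma quarter' (a b : ℝ) :
    (1:ℝ) / ((2 * a) ^ 2 + (2 * b) ^ 2) ^ 2 = 1 / (a ^ 2 + b ^ 2) ^ 2 / 16 := by
  rcases eq_or_ne (a ^ 2 + b ^ 2) 0 with h | h
  · have ha : a = 0 := by nlinarith [sq_nonneg a, sq_nonneg b]
    have hb : b = 0 := by nlinarith [sq_nonneg a, sq_nonneg b]
    simp [ha, hb]
  · have h16 : ((2 * a) ^ 2 + (2 * b) ^ 2) ^ 2 = 16 * (a ^ 2 + b ^ 2) ^ 2 := by ring
    rw [h16, div_div, div_eq_div_iff (mul_ne_zero (by norm_num) (pow_ne_zero 2 h))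
      (mul_ne_zero (pow_ne_zero 2 h) (by norm_num))]
    ring

/-- even-even sum of master = T/16 -/
lemma tsum_ee_master : (∑' p : ℤ × ℤ, if Even p.1 ∧ Even p.2 then 1 / (Dd p) ^ 2 else 0)
    = (∑' p : ℤ × ℤ, 1 / (Dd p) ^ 2) / 16 := by
  set f : ℤ × ℤ → ℝ := fun p => if Even p.1 ∧ Even p.2 then 1 / (Dd p) ^ 2 else 0 with hf
  have hinj : Function.Injective (fun p : ℤ × ℤ => ((2 * p.1, 2 * p.2) : ℤ × ℤ)) := by
    intro a b hab
    simp only [Prod.mk.injEq] at hab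
    exact Prod.ext (by omega) (by omega)
  have hzero : ∀ x ∉ Set.range (fun p : ℤ × ℤ => ((2 * p.1, 2 * p.2) : ℤ × ℤ)), f x = 0 := by
    intro x hx
    rw [hf]
    simp only
    rw [if_neg]
    rintro ⟨⟨a, ha⟩, ⟨b, hb⟩⟩
    exact hx ⟨(a, b), by simp [Prod.ext_iff]; omega⟩
  have h := hinj.tsum_eq (Function.support_subset_iff'.mpr hzero)
  rw [← h]
  have hcomp : ∀ p : ℤ × ℤ, f (2 * p.1, 2 * p.2) = (1 / (Dd p) ^ 2) / 16 := by
    intro p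
    rw [hf]
    simp only
    rw [if_pos ⟨⟨p.1, by ring⟩, ⟨p.2, by ring⟩⟩]
    unfold Dd
    push_cast
    exact quarter' (p.1:ℝ) (p.2:ℝ)
  calc ∑' p : ℤ × ℤ, f (2 * p.1, 2 * p.2) = ∑' p : ℤ × ℤ, (1 / (Dd p) ^ 2) / 16 :=
        tsum_congr hcomp
    _ = (∑' p : ℤ × ℤ, 1 / (Dd p) ^ 2) / 16 := by rw [tsum_div_const]

/-- same parity sum = E/4 -/
lemma tsum_same_parity : (∑' p : ℤ × ℤ, if (Even p.1 ↔ Even p.2) then gg p else 0)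
    = (∑' p, gg p) / 4 := by
  set f : ℤ × ℤ → ℝ := fun p => if (Even p.1 ↔ Even p.2) then gg p else 0 with hf
  set i : ℤ × ℤ → ℤ × ℤ := fun p => (p.1 + p.2, p.1 - p.2) with hi
  have hinj : Function.Injective i := by
    intro a b hab
    simp only [hi, Prod.mk.injEq] at hab
    exact Prod.ext (by omega) (by omega)
  have hzero : ∀ x ∉ Set.range i, f x = 0 := by
    intro x hx
    rw [hf]
    simp only
    rw [if_neg]
    intro hpar
    apply hx
    have : Even (x.1 + x.2) := by
      rcases Int.even_or_odd x.1 with h1 | h1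
      · exact Even.add h1 (hpar.mp h1)
      · have h2 : Odd x.2 := by
          rcases Int.even_or_odd x.2 with h | h
          · exact absurd (hpar.mpr h) (Int.not_even_iff_odd.mpr h1)
          · exact h
        exact Odd.add_odd h1 h2
    obtain ⟨k, hk⟩ := this
    exact ⟨(k, x.1 - k), by simp [hi, Prod.ext_iff]; omega⟩
  have h := hinj.tsum_eq (Function.support_subset_iff'.mpr hzero)
  rw [← h]
  have hcomp : ∀ p : ℤ × ℤ, f (i p) = (gg1 p + gg p - 2 * hh p) / 8 := by
    intro p
    rw [hf, hi]
    simp only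
    rw [if_pos (by simp only [Int.even_add, Int.even_sub])]
    unfold gg gg1 hh Dd
    push_cast
    rcases eq_or_ne p 0 with hp | hp
    · simp [hp]
    · have hD := Dd_pos hp
      unfold Dd at hD
      have h8 : ((p.1:ℝ) + p.2) ^ 2 + ((p.1:ℝ) - p.2) ^ 2 = 2 * ((p.1:ℝ)^2 + (p.2:ℝ)^2) := by ring
      rw [h8]
      have hne : ((p.1:ℝ)^2 + (p.2:ℝ)^2) ≠ 0 := ne_of_gt hD
      field_simp [hne]
      ring
  rw [tsum_congr hcomp]
  have hs : Summable fun p => gg1 p + gg p - 2 * hh p :=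
    (summable_gg1.add summable_gg).sub (summable_hh.mul_left 2)
  rw [tsum_div_const, Summable.tsum_sub (summable_gg1.add summable_gg) (summable_hh.mul_left 2),
    Summable.tsum_add summable_gg1 summable_gg, tsum_mul_left, tsum_hh_zero, tsum_gg1_eq]
  ring

end AuxStmt6

theorem stmt6 :
    (∑' p : {p : ℤ × ℤ // p ≠ 0}, (if Even p.1.1 ∧ Even p.1.2 then (1 : ℝ) / ((p.1.1 : ℝ) ^ 2 + (p.1.2 : ℝ) ^ 2) ^ 2 else 0)) + (∑' p : {p : ℤ × ℤ // p ≠ 0}, (if Even p.1.1 then (p.1.2 : ℝ) ^ 2 / ((p.1.1 : ℝ) ^ 2 + (p.1.2 : ℝ) ^ 2) ^ 3 else 0))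
      = (∑' p : {p : ℤ × ℤ // p ≠ 0}, (if Odd p.1.1 then (p.1.1 : ℝ) ^ 2 / ((p.1.1 : ℝ) ^ 2 + (p.1.2 : ℝ) ^ 2) ^ 3 else 0)) := by
  classical
  -- the three summands as functions on the full plane
  set F1 : ℤ × ℤ → ℝ := fun p => if Even p.1 ∧ Even p.2 then 1 / (Dd p) ^ 2 else 0 with hF1
  set F2 : ℤ × ℤ → ℝ := fun p => if Even p.1 then gg p else 0 with hF2
  set F3 : ℤ × ℤ → ℝ := fun p => if Odd p.1 then gg1 p else 0 with hF3
  have hs1 : (∑' p : {p : ℤ × ℤ // p ≠ 0}, F1 p.1) = ∑' p : ℤ × ℤ, F1 p := by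
    apply tsum_subtype_eq_of_support_subset
    intro p hp
    rcases eq_or_ne p 0 with h0 | h0
    · exact absurd (by simp [hF1, h0, Dd]) (Function.mem_support.mp hp)
    · exact h0
  have hs2 : (∑' p : {p : ℤ × ℤ // p ≠ 0}, F2 p.1) = ∑' p : ℤ × ℤ, F2 p := by
    apply tsum_subtype_eq_of_support_subset
    intro p hp
    rcases eq_or_ne p 0 with h0 | h0
    · exact absurd (by simp [hF2, h0, gg, Dd]) (Function.mem_support.mp hp)
    · exact h0
  have hs3 : (∑' p : {p : ℤ × ℤ // p ≠ 0}, F3 p.1) = ∑' p : ℤ × ℤ, F3 p := by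
    apply tsum_subtype_eq_of_support_subset
    intro p hp
    rcases eq_or_ne p 0 with h0 | h0
    · exact absurd (by simp [hF3, h0, gg1, Dd]) (Function.mem_support.mp hp)
    · exact h0
  have hgoal1 : (∑' p : {p : ℤ × ℤ // p ≠ 0},
      (if Even p.1.1 ∧ Even p.1.2 then (1 : ℝ) / ((p.1.1 : ℝ) ^ 2 + (p.1.2 : ℝ) ^ 2) ^ 2 else 0))
      = ∑' p : ℤ × ℤ, F1 p := hs1
  have hgoal2 : (∑' p : {p : ℤ × ℤ // p ≠ 0},
      (if Even p.1.1 then (p.1.2 : ℝ) ^ 2 / ((p.1.1 : ℝ) ^ 2 + (p.1.2 : ℝ) ^ 2) ^ 3 else 0))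
      = ∑' p : ℤ × ℤ, F2 p := hs2
  have hgoal3 : (∑' p : {p : ℤ × ℤ // p ≠ 0},
      (if Odd p.1.1 then (p.1.1 : ℝ) ^ 2 / ((p.1.1 : ℝ) ^ 2 + (p.1.2 : ℝ) ^ 2) ^ 3 else 0))
      = ∑' p : ℤ × ℤ, F3 p := hs3
  rw [hgoal1, hgoal2, hgoal3]
  -- names for the parity-restricted sums
  set E := ∑' p : ℤ × ℤ, gg p with hE
  set Aee := ∑' p : ℤ × ℤ, (if Even p.1 ∧ Even p.2 then gg p else 0) with hAee
  set Aeo := ∑' p : ℤ × ℤ, (if Even p.1 ∧ Odd p.2 then gg p else 0) with hAeo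
  set Aoo := ∑' p : ℤ × ℤ, (if Odd p.1 ∧ Odd p.2 then gg p else 0) with hAoo
  -- F1 sum = E / 8
  have h1 : (∑' p : ℤ × ℤ, F1 p) = E / 8 := by
    rw [hF1, tsum_ee_master, tsum_master_eq, ← hE]
    ring
  -- F2 sum = Aee + Aeo
  have h2 : (∑' p : ℤ × ℤ, F2 p) = Aee + Aeo := by
    rw [hF2, hAee, hAeo, ← Summable.tsum_add (summable_ite _) (summable_ite _)]
    apply tsum_congr
    intro p
    by_cases he1 : Even p.1
    · by_cases he2 : Even p.2
      · have ho2 : ¬ Odd p.2 := by simpa [Int.not_odd_iff_even] using he2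
        simp [he1, he2, ho2]
      · have ho2 : Odd p.2 := Int.not_even_iff_odd.mp he2
        simp [he1, he2, ho2]
    · simp [he1]
  -- F3 sum = Aeo + Aoo
  have h3 : (∑' p : ℤ × ℤ, F3 p) = Aeo + Aoo := by
    have hswap : (∑' p : ℤ × ℤ, F3 p) = ∑' p : ℤ × ℤ, (if Odd p.2 then gg p else 0) := by
      have h1' : ∑' p : ℤ × ℤ, F3 ((Equiv.prodComm ℤ ℤ) p) = ∑' p : ℤ × ℤ, F3 p :=
        (Equiv.prodComm ℤ ℤ).tsum_eq F3
      rw [← h1']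
      apply tsum_congr
      intro p
      rw [hF3]
      show (if Odd p.2 then gg1 (p.2, p.1) else 0) = (if Odd p.2 then gg p else 0)
      congr 1
      unfold gg1 gg Dd
      rw [add_comm ((p.2:ℝ) ^ 2) ((p.1:ℝ) ^ 2)]
    rw [hswap, hAeo, hAoo, ← Summable.tsum_add (summable_ite _) (summable_ite _)]
    apply tsum_congr
    intro p
    by_cases ho2 : Odd p.2
    · by_cases he1 : Even p.1
      · have ho1 : ¬ Odd p.1 := by simpa [Int.not_odd_iff_even] using he1
        simp [ho2, he1, ho1]
      · have ho1 : Odd p.1 := Int.not_even_iff_odd.mp he1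
        simp [ho2, he1, ho1]
    · simp [ho2]
  -- Aee = E / 16
  have h4 : Aee = E / 16 := by rw [hAee, hE]; exact tsum_ee
  -- Aee + Aoo = E / 4
  have h5 : Aee + Aoo = E / 4 := by
    rw [hAee, hAoo, ← Summable.tsum_add (summable_ite _) (summable_ite _), hE, ← tsum_same_parity]
    apply tsum_congr
    intro p
    by_cases he1 : Even p.1
    · by_cases he2 : Even p.2
      · have ho1 : ¬ Odd p.1 := by simpa [Int.not_odd_iff_even] using he1
        simp [he1, he2, ho1]
      · have h : ¬ (Even p.1 ↔ Even p.2) := by tauto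
        have ho1 : ¬ Odd p.1 := by simpa [Int.not_odd_iff_even] using he1
        simp [he1, he2, h, ho1]
    · by_cases he2 : Even p.2
      · have h : ¬ (Even p.1 ↔ Even p.2) := by tauto
        have ho2 : ¬ Odd p.2 := by simpa [Int.not_odd_iff_even] using he2
        simp [he1, he2, h, ho2]
      · have h : (Even p.1 ↔ Even p.2) := by tauto
        have ho1 : Odd p.1 := Int.not_even_iff_odd.mp he1
        have ho2 : Odd p.2 := Int.not_even_iff_odd.mp he2
        simp [he1, ho1, ho2, h]
  rw [h1, h2, h3]
  linarith
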